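/- arXiv:1607.07658 — 3 statements merged into one kernel-verified Lean document; each statement's English description precedes it below -/
import Mathlib

section
/- Let w_0 = (x_1,...,x_k) be a non-decreasing sequence of integers with l ≤ x_l ≤ n-1 for every l ∈ {1,...,k}. Then the number of permutations of {1,...,n} that are lucky for w_0 and have no w_0-threshold equals k · (n-k-1)! · Π_{j=1}^{k} (x_j - j + 1). -/
open Finset

namespace Secretary

/-- Binomial coefficient on integers: zero when `b < 0` or `b > a`. -/
noncomputable def Cb (a b : ℤ) : ℝ :=
  if 0 ≤ b ∧ b ≤ a then (Nat.choose a.toNat b.toNat : ℝ) else 0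

/-- The value `π(i)` of a permutation of `{1,...,n}` in 1-based indexing. -/
def pv (n : ℕ) (π : Equiv.Perm (Fin n)) (i : ℕ) : ℕ :=
  if h : i - 1 < n then ((π ⟨i - 1, h⟩ : Fin n) : ℕ) + 1 else 0

/-- The relative rank `ρ_π(i)`: the number of `j ∈ {1,...,i}` with `π(j) ≤ π(i)`. -/
def rho (n : ℕ) (π : Equiv.Perm (Fin n)) (i : ℕ) : ℕ :=
  ((Finset.Icc 1 i).filter fun j => pv n π j ≤ pv n π i).card

/-- Extension of a sequence `s` with `s (k+1) = n - 1`. -/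
def sExt (n k : ℕ) (s : ℕ → ℕ) (l : ℕ) : ℕ := if l = k + 1 then n - 1 else s l

/-- `i` is a `(π, l, w)`-element. -/
def IsElem (n k : ℕ) (s : ℕ → ℕ) (π : Equiv.Perm (Fin n)) (l i : ℕ) : Prop :=
  sExt n k s l < i ∧ i ≤ sExt n k s (l + 1) ∧ rho n π i ≤ l

/-- `l` is a `w`-threshold of `π`. -/
def IsThreshold (n k : ℕ) (s : ℕ → ℕ) (π : Equiv.Perm (Fin n)) (l : ℕ) : Prop :=
  1 ≤ l ∧ l ≤ k ∧ ∃ i, IsElem n k s π l i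

open Classical in
/-- `π` is a lucky permutation for the sequence `w = s`. -/
def Lucky (n k : ℕ) (s : ℕ → ℕ) (π : Equiv.Perm (Fin n)) : Prop :=
  if ∃ l, IsThreshold n k s π l then
    pv n π (sInf {i | IsElem n k s π (sInf {l | IsThreshold n k s π l}) i}) ≤ k
  else pv n π n ≤ k

/-- The maps `r_l` (first argument an integer `l ≤ k`). -/
noncomputable def rr (n k : ℕ) (l : ℤ) (x : ℕ) : ℝ :=
  if l < 0 then 0
  else if l = 0 then
    1 / (x : ℝ) - (k : ℝ) / n - Cb ((n : ℤ) - x - 1) k / ((x : ℝ) * Cb n k)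
      - (1 / Cb n k) * ∑ j ∈ Finset.Icc 1 x, Cb ((n : ℤ) - j - 1) ((k : ℤ) - 1) / (j : ℝ)
  else
    ((Nat.factorial (x - l.toNat - 1) : ℝ) / (Nat.factorial x : ℝ)) *
      (1 - (1 / ((l : ℝ) * Cb n x)) *
        ∑ j ∈ Finset.range (l.toNat + 1),
          ((l : ℝ) - j) * Cb k j * Cb ((n : ℤ) - k) ((x : ℤ) - j))

/-- The constant `δ_{k,n}`. -/
noncomputable def delta (n k : ℕ) : ℝ :=
  if k = 1 then -(1 / (n : ℝ)) * ∑ j ∈ Finset.Icc 1 (n - 1), (1 : ℝ) / j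
  else (Nat.factorial (n - k) : ℝ) / (Nat.factorial n : ℝ)

/-- The maps `d_l` for `0 ≤ l ≤ k`. -/
noncomputable def d (n k : ℕ) (l x : ℕ) : ℝ :=
  if l = 0 then
    -1 + (k : ℝ) * x / n + Cb ((n : ℤ) - x - 1) k / Cb n k
      + ((x : ℝ) / Cb n k) * ∑ j ∈ Finset.Icc 1 x, Cb ((n : ℤ) - j - 1) ((k : ℤ) - 1) / (j : ℝ)
  else if l = 1 then
    -((k : ℝ) / n) - (1 / Cb n k) * ∑ j ∈ Finset.Icc 1 x, Cb ((n : ℤ) - j - 1) ((k : ℤ) - 1) / (j : ℝ)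
  else
    ((k : ℝ) * (Nat.factorial x : ℝ) * (Nat.factorial (n - l - x) : ℝ) /
        ((l : ℝ) * ((l : ℝ) - 1) * (Nat.factorial n : ℝ))) *
      ∑ j ∈ Finset.range (l - 1), Cb ((k : ℤ) - 1) j * Cb ((n : ℤ) - k) ((x : ℤ) + l - j - 1)

/-- The maps `c_l(x) = d_l(x - l)`. -/
noncomputable def c (n k l x : ℕ) : ℝ := d n k l (x - l)

/-- The constant `ξ_{k,n}`. -/
noncomputable def xi (n k : ℕ) : ℝ :=
  (k : ℝ) * (Nat.factorial (n - k - 1) : ℝ) / (Nat.factorial n : ℝ)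

/-- `w` (given as a 1-indexed function) is a word in `X^{(k-l)}`, i.e. its `j`-th letter
belongs to `X_{l+j} = {l+j, ..., n-1}` for `1 ≤ j ≤ k - l`. -/
def memX (n k l : ℕ) (w : ℕ → ℕ) : Prop :=
  ∀ j ∈ Finset.Icc 1 (k - l), l + j ≤ w j ∧ w j ≤ n - 1

/-- The left-shift operator removing the first `l` letters of a word. -/
def shift (l : ℕ) (w : ℕ → ℕ) : ℕ → ℕ := fun j => w (l + j)

/-- The maps `R_{l,j}`. -/
noncomputable def Rmap (n k l : ℕ) (w : ℕ → ℕ) (j : ℕ) : ℝ :=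
  if 1 ≤ j ∧ j ≤ k - l then
    rr n k ((l : ℤ) + j - 1) (w j)
      - rr n k ((l : ℤ) + j - 1) (if j = k - l then n - 1 else w (j + 1))
  else 0

/-- The maps `Γ_{l,j,j'}`. -/
noncomputable def Gam (n k l j j' : ℕ) (w : ℕ → ℕ) : ℝ :=
  if 1 ≤ j ∧ j ≤ j' ∧ j' ≤ k - l then
    ∏ t ∈ Finset.Icc j j', ((w t : ℝ) - l - t + 1)
  else 1

/-- The maps `T_l`. -/
noncomputable def Tmap (n k l : ℕ) (w : ℕ → ℕ) : ℝ :=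
  (∑ j ∈ Finset.Icc 1 (k - l), Rmap n k l w j * Gam n k l 1 j w)
    + xi n k * Gam n k l 1 (k - l) w

/-- The maps `D_l(w) = r_{l-1}(x_1) - T_l(w)`, with `x_1 := n-1` when `l = k`. -/
noncomputable def Dmap (n k l : ℕ) (w : ℕ → ℕ) : ℝ :=
  rr n k ((l : ℤ) - 1) (if l = k then n - 1 else w 1) - Tmap n k l w

/-- The maps `F_{l,w}(x) = -c_{l-1}(x) - x·D_l(w)`. -/
noncomputable def Fmap (n k l : ℕ) (w : ℕ → ℕ) (x : ℕ) : ℝ :=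
  -(c n k (l - 1) x) - (x : ℝ) * Dmap n k l w

/-- The maps `a_l`. -/
noncomputable def amap (n k l x : ℕ) : ℝ :=
  (1 / Cb n x) * ∑ j ∈ Finset.range (l + 1), Cb k j * Cb ((n : ℤ) - k) ((x : ℤ) - j)

/-- The maps `b_l`. -/
noncomputable def bmap (n k l x : ℕ) : ℝ :=
  (1 / ((l : ℝ) * Cb n x)) *
    ∑ j ∈ Finset.range (l + 1), (j : ℝ) * Cb k j * Cb ((n : ℤ) - k) ((x : ℤ) - j)

/-- `π ∈ S(l0, i0)`: `π` is lucky for `s`, `l0` is the smallest `s`-threshold of `π`,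
and `i0` is the smallest `(π, l0, s)`-element. -/
def SMem (n k : ℕ) (s : ℕ → ℕ) (l0 i0 : ℕ) (π : Equiv.Perm (Fin n)) : Prop :=
  Lucky n k s π ∧ IsLeast {l | IsThreshold n k s π l} l0 ∧
    IsLeast {i | IsElem n k s π l0 i} i0

/-- `π ∈ S(Y, Y', l0, i0)`. -/
def SYYMem (n k : ℕ) (s : ℕ → ℕ) (Y Y' : Finset ℕ) (l0 i0 : ℕ) (π : Equiv.Perm (Fin n)) :
    Prop :=
  SMem n k s l0 i0 π ∧ ((Finset.Icc 1 i0).image (pv n π)) ∩ Finset.Icc 1 k = Y ∧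
    ((Finset.Icc 1 i0).image (pv n π)) ∩ Finset.Icc (k + 1) n = Y'

/-! ### Auxiliary lemmas -/

lemma pv_eq' (n : ℕ) (π : Equiv.Perm (Fin n)) (i : ℕ) (h : i - 1 < n) :
    pv n π i = (π ⟨i - 1, h⟩ : ℕ) + 1 := dif_pos h

lemma pv_apply' (n : ℕ) (π : Equiv.Perm (Fin n)) (b : Fin n) :
    pv n π ((b : ℕ) + 1) = (π b : ℕ) + 1 := by
  rw [pv_eq' n π _ (by simp [b.isLt])]
  simp [Fin.eta]

lemma pv_symm' (n : ℕ) (π : Equiv.Perm (Fin n)) (b : Fin n) :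
    pv n π ((π.symm b : ℕ) + 1) = (b : ℕ) + 1 := by
  rw [pv_apply']; simp

lemma pv_mem' (n : ℕ) (π : Equiv.Perm (Fin n)) (i : ℕ) (h1 : 1 ≤ i) (h2 : i ≤ n) :
    pv n π i ∈ Icc 1 n := by
  have h : i - 1 < n := by omega
  rw [pv_eq' n π i h]
  have := (π ⟨i - 1, h⟩).isLt
  simp only [mem_Icc]; omega

lemma pv_inj' (n : ℕ) (π : Equiv.Perm (Fin n)) (i j : ℕ) (hi : i ∈ Icc 1 n) (hj : j ∈ Icc 1 n)
    (h : pv n π i = pv n π j) : i = j := by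
  simp only [mem_Icc] at hi hj
  have h1 : i - 1 < n := by omega
  have h2 : j - 1 < n := by omega
  rw [pv_eq' n π i h1, pv_eq' n π j h2] at h
  have := π.injective (Fin.val_injective (by omega : ((π ⟨i-1,h1⟩ : Fin n) : ℕ) = π ⟨j-1,h2⟩))
  have := Fin.mk.injEq (i-1) h1 (j-1) h2 ▸ congrArg Fin.val this
  simp at this
  omega

/-- The rank at the last index equals the value. -/
lemma rho_top (n : ℕ) (π : Equiv.Perm (Fin n)) (hn : 1 ≤ n) : rho n π n = pv n π n := by
  classical
  set v := pv n π n with hv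
  have hvmem := pv_mem' n π n hn le_rfl
  simp only [mem_Icc] at hvmem
  have hcard : ((Icc 1 n).filter fun j => pv n π j ≤ v).card
      = ((Icc 1 n).filter fun x => x ≤ v).card := by
    apply Finset.card_bij (fun j _ => pv n π j)
    · intro a ha
      simp only [mem_filter] at ha ⊢
      exact ⟨pv_mem' n π a (mem_Icc.mp ha.1).1 (mem_Icc.mp ha.1).2, ha.2⟩
    · intro a ha b hb hab
      simp only [mem_filter] at ha hb
      exact pv_inj' n π a b ha.1 hb.1 hab
    · intro x hx
      simp only [mem_filter, mem_Icc] at hx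
      refine ⟨(π.symm ⟨x - 1, by omega⟩ : ℕ) + 1, ?_⟩
      have hpv : pv n π ((π.symm ⟨x - 1, by omega⟩ : ℕ) + 1) = x := by
        rw [pv_symm']; simp; omega
      have hlt := (π.symm (⟨x - 1, by omega⟩ : Fin n)).isLt
      simp only [mem_filter, mem_Icc]
      exact ⟨⟨⟨by omega, by omega⟩, by rw [hpv]; exact hx.2⟩, hpv⟩
  have : (Icc 1 n).filter (fun x => x ≤ v) = Icc 1 v := by
    ext x; simp only [mem_filter, mem_Icc]; omega
  rw [rho, hcard, this, Nat.card_Icc]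
  omega

lemma rho_pos (n : ℕ) (π : Equiv.Perm (Fin n)) (i : ℕ) (h1 : 1 ≤ i) :
    1 ≤ rho n π i := by
  rw [rho]
  have : i ∈ (Icc 1 i).filter fun j => pv n π j ≤ pv n π i := by
    simp [mem_filter, mem_Icc, h1]
  exact Finset.card_pos.mpr ⟨i, this⟩

/-- Reduction of a permutation of `Fin (m+1)` to `Fin m` by deleting the last position
and relabelling values in an order-preserving way. -/
def reduce (m : ℕ) (π : Equiv.Perm (Fin (m+1))) : Equiv.Perm (Fin m) :=
  (finSuccAboveEquiv (Fin.last m)).trans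
    ((Equiv.subtypeEquiv (π : Fin (m+1) ≃ Fin (m+1))
        (fun a => not_congr ⟨fun h => by rw [h], fun h => π.injective h⟩)).trans
      (finSuccAboveEquiv (π (Fin.last m))).symm)

lemma reduce_spec (m : ℕ) (π : Equiv.Perm (Fin (m+1))) (j : Fin m) :
    (π (Fin.last m)).succAbove (reduce m π j) = π (Fin.castSucc j) := by
  have h : ((finSuccAboveEquiv (π (Fin.last m))) (reduce m π j) : Fin (m+1))
      = π (Fin.castSucc j) := by
    simp [reduce, finSuccAboveEquiv_apply, Fin.succAbove_last]
  rw [finSuccAboveEquiv_apply] at h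
  exact h

lemma pv_le_reduce (m : ℕ) (π : Equiv.Perm (Fin (m+1))) (i j : ℕ)
    (hi1 : 1 ≤ i) (hi2 : i ≤ m) (hj1 : 1 ≤ j) (hj2 : j ≤ m) :
    (pv m (reduce m π) j ≤ pv m (reduce m π) i ↔ pv (m+1) π j ≤ pv (m+1) π i) := by
  have hi : i - 1 < m := by omega
  have hj : j - 1 < m := by omega
  have hi' : i - 1 < m + 1 := by omega
  have hj' : j - 1 < m + 1 := by omega
  rw [pv_eq' m _ i hi, pv_eq' m _ j hj, pv_eq' (m+1) π i hi', pv_eq' (m+1) π j hj']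
  have ei : (⟨i - 1, hi'⟩ : Fin (m+1)) = Fin.castSucc ⟨i - 1, hi⟩ := rfl
  have ej : (⟨j - 1, hj'⟩ : Fin (m+1)) = Fin.castSucc ⟨j - 1, hj⟩ := rfl
  rw [ei, ej, ← reduce_spec m π ⟨i-1, hi⟩, ← reduce_spec m π ⟨j-1, hj⟩]
  have key : ((reduce m π) ⟨j-1,hj⟩ ≤ (reduce m π) ⟨i-1,hi⟩) ↔
      ((π (Fin.last m)).succAbove ((reduce m π) ⟨j-1,hj⟩)
        ≤ (π (Fin.last m)).succAbove ((reduce m π) ⟨i-1,hi⟩)) :=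
    ((Fin.strictMono_succAbove (π (Fin.last m))).le_iff_le).symm
  simp only [Fin.le_def] at key
  omega

lemma rho_reduce (m : ℕ) (π : Equiv.Perm (Fin (m+1))) (i : ℕ) (h1 : 1 ≤ i) (h2 : i ≤ m) :
    rho m (reduce m π) i = rho (m+1) π i := by
  unfold rho
  congr 1
  apply filter_congr
  intro j hj
  simp only [mem_Icc] at hj
  exact pv_le_reduce m π i j h1 h2 hj.1 (le_trans hj.2 h2)

lemma rho_top_succ (m : ℕ) (π : Equiv.Perm (Fin (m+1))) :
    rho (m+1) π (m+1) = (π (Fin.last m) : ℕ) + 1 := by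
  rw [rho_top (m+1) π (by omega), pv_eq' (m+1) π (m+1) (by omega)]
  rfl

lemma reduce_pair_bijective (m : ℕ) :
    Function.Bijective (fun π : Equiv.Perm (Fin (m+1)) => (π (Fin.last m), reduce m π)) := by
  rw [Fintype.bijective_iff_injective_and_card]
  constructor
  · intro π π' h
    simp only [Prod.mk.injEq] at h
    apply Equiv.ext
    intro x
    induction x using Fin.lastCases with
    | last => exact h.1
    | cast j =>
      rw [← reduce_spec m π j, ← reduce_spec m π' j, h.1, h.2]
  · simp [Fintype.card_perm, Nat.factorial_succ]

/-- Counting permutations subject to independent constraints on the relative ranks. -/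
lemma count_rho (m : ℕ) (Q : ℕ → ℕ → Prop) [∀ i, DecidablePred (Q i)] :
    Nat.card {π : Equiv.Perm (Fin m) // ∀ i ∈ Icc 1 m, Q i (rho m π i)} =
      ∏ i ∈ Icc 1 m, ((Icc 1 i).filter (Q i)).card := by
  induction m with
  | zero =>
    rw [show (Icc 1 0 : Finset ℕ) = ∅ from rfl]
    simp only [Finset.notMem_empty, false_implies, implies_true, Finset.prod_empty]
    rw [Nat.card_congr (Equiv.subtypeUnivEquiv (fun _ => trivial)),
      Nat.card_eq_fintype_card, Fintype.card_perm, Fintype.card_fin, Nat.factorial_zero]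
  | succ m ih =>
    have E1 : {π : Equiv.Perm (Fin (m+1)) // ∀ i ∈ Icc 1 (m+1), Q i (rho (m+1) π i)} ≃
        {p : Fin (m+1) × Equiv.Perm (Fin m) //
          Q (m+1) ((p.1 : ℕ) + 1) ∧ ∀ i ∈ Icc 1 m, Q i (rho m p.2 i)} := by
      refine (Equiv.ofBijective _ (reduce_pair_bijective m)).subtypeEquiv (fun π => ?_)
      simp only [Equiv.ofBijective_apply]
      constructor
      · intro h
        refine ⟨?_, fun i hi => ?_⟩
        · have := h (m+1) (by simp)
          rwa [rho_top_succ] at this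
        · simp only [mem_Icc] at hi
          rw [rho_reduce m π i hi.1 hi.2]
          exact h i (by simp only [mem_Icc]; omega)
      · intro h i hi
        simp only [mem_Icc] at hi
        rcases Nat.lt_or_ge i (m+1) with hlt | hge
        · rw [← rho_reduce m π i hi.1 (by omega)]
          exact h.2 i (by simp only [mem_Icc]; omega)
        · have : i = m + 1 := by omega
          subst this
          rw [rho_top_succ]
          exact h.1
    rw [Nat.card_congr (E1.trans (Equiv.subtypeProdEquivProd
      (p := fun v : Fin (m+1) => Q (m+1) ((v : ℕ) + 1))
      (q := fun σ : Equiv.Perm (Fin m) => ∀ i ∈ Icc 1 m, Q i (rho m σ i)))),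
      Nat.card_prod, ih]
    have hv : Nat.card {v : Fin (m+1) // Q (m+1) ((v : ℕ) + 1)} =
        ((Icc 1 (m+1)).filter (Q (m+1))).card := by
      rw [Nat.card_eq_fintype_card, Fintype.card_subtype]
      refine Finset.card_bij (fun (v : Fin (m+1)) _ => (v : ℕ) + 1) ?_ ?_ ?_
      · intro v hv
        simp only [mem_filter, mem_univ, true_and] at hv ⊢
        have := v.isLt
        exact ⟨mem_Icc.mpr ⟨by omega, by omega⟩, hv⟩
      · intro a _ b _ hab
        beta_reduce at hab
        exact Fin.val_injective (by omega)
      · intro r hr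
        simp only [mem_filter, mem_Icc] at hr
        refine ⟨⟨r - 1, by omega⟩, ?_, by simp; omega⟩
        simp only [mem_filter, mem_univ, true_and]
        simpa [Nat.sub_add_cancel hr.1.1] using hr.2
    rw [hv, Finset.prod_Icc_succ_top (by omega : 1 ≤ m + 1), mul_comm]

lemma prod_Icc_id_fact (N : ℕ) : ∏ i ∈ Icc 1 N, i = N.factorial := by
  rw [← Finset.Ico_add_one_right_eq_Icc, Finset.prod_Ico_id_eq_factorial]

lemma prodIoc (k a : ℕ) (hka : k ≤ a) : ∀ b, a ≤ b →
    (∏ i ∈ Ioc a b, (i - k)) * (a - k) = (∏ i ∈ Ioc a b, (i - k - 1)) * (b - k) := by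
  intro b hb
  induction b, hb using Nat.le_induction with
  | base => simp
  | succ b hb ihb =>
    rw [Finset.prod_Ioc_succ_top hb, Finset.prod_Ioc_succ_top hb,
      (by omega : b + 1 - k - 1 = b - k), mul_right_comm, ihb, mul_right_comm]

lemma telescope (k : ℕ) : ∀ (s : ℕ → ℕ) (N : ℕ),
    (∀ l, 1 ≤ l → l + 1 ≤ k → s l ≤ s (l+1)) →
    (∀ l, 1 ≤ l → l ≤ k → l ≤ s l ∧ s l ≤ N) →
    ∏ i ∈ Icc 1 N, (i - ((Icc 1 k).filter (fun l => s l < i)).card)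
      = (N - k).factorial * ∏ j ∈ Icc 1 k, (s j - j + 1) := by
  induction k with
  | zero =>
    intro s N _ _
    simp [prod_Icc_id_fact]
  | succ k ihk =>
    intro s N hmono hbdd
    have hchain : ∀ d l, 1 ≤ l → l + d ≤ k + 1 → s l ≤ s (l + d) := by
      intro d
      induction d with
      | zero => intro l _ _; simp
      | succ d ihd =>
        intro l hl hld
        calc s l ≤ s (l + d) := ihd l hl (by omega)
        _ ≤ s (l + d + 1) := hmono (l + d) (by omega) (by omega)
    obtain ⟨ha1, ha2⟩ := hbdd (k+1) (by omega) le_rfl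
    set a := s (k+1) with haa
    have hsa : ∀ l, 1 ≤ l → l ≤ k → s l ≤ a := by
      intro l hl hlk
      have := hchain (k + 1 - l) l hl (by omega)
      rwa [(by omega : l + (k + 1 - l) = k + 1)] at this
    have hc : ∀ i, ((Icc 1 (k+1)).filter (fun l => s l < i)).card
        = (if a < i then ((Icc 1 k).filter (fun l => s l < i)).card + 1
            else ((Icc 1 k).filter (fun l => s l < i)).card) := by
      intro i
      have : (Icc 1 (k+1)) = insert (k+1) (Icc 1 k) := by
        ext x; simp only [mem_insert, mem_Icc]; omega
      rw [this, Finset.filter_insert]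
      split
      · rw [Finset.card_insert_of_notMem (by simp only [mem_filter, mem_Icc]; omega)]
      · rfl
    have hck : ∀ i, a < i → ((Icc 1 k).filter (fun l => s l < i)).card = k := by
      intro i hai
      rw [Finset.filter_true_of_mem, Nat.card_Icc]
      · omega
      · intro l hl
        simp only [mem_Icc] at hl
        exact lt_of_le_of_lt (hsa l hl.1 hl.2) hai
    have hsplit : ∀ f : ℕ → ℕ, (∏ i ∈ Icc 1 N, f i)
        = (∏ i ∈ Icc 1 a, f i) * ∏ i ∈ Ioc a N, f i := by
      intro f
      have e1 : Icc 1 N = Ioc 0 N := by ext x; simp only [mem_Icc, mem_Ioc]; omega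
      have e2 : Icc 1 a = Ioc 0 a := by ext x; simp only [mem_Icc, mem_Ioc]; omega
      rw [e1, e2, Finset.prod_Ioc_consecutive f (by omega : 0 ≤ a) ha2]
    have hP1 : (∏ i ∈ Icc 1 a, (i - ((Icc 1 (k+1)).filter (fun l => s l < i)).card))
        = ∏ i ∈ Icc 1 a, (i - ((Icc 1 k).filter (fun l => s l < i)).card) := by
      apply Finset.prod_congr rfl
      intro i hi
      simp only [mem_Icc] at hi
      rw [hc i, if_neg (by omega)]
    have hP2 : (∏ i ∈ Ioc a N, (i - ((Icc 1 (k+1)).filter (fun l => s l < i)).card))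
        = ∏ i ∈ Ioc a N, (i - k - 1) := by
      apply Finset.prod_congr rfl
      intro i hi
      simp only [mem_Ioc] at hi
      rw [hc i, if_pos hi.1, hck i hi.1]
      omega
    have hP0 : (∏ i ∈ Ioc a N, (i - ((Icc 1 k).filter (fun l => s l < i)).card))
        = ∏ i ∈ Ioc a N, (i - k) := by
      apply Finset.prod_congr rfl
      intro i hi
      simp only [mem_Ioc] at hi
      rw [hck i hi.1]
    have hIH := ihk s N (fun l hl hlk => hmono l hl (by omega))
      (fun l hl hlk => hbdd l hl (by omega))
    rw [hsplit, hP0] at hIH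
    have h2 := prodIoc k a (by omega : k ≤ a) N ha2
    set A := ∏ i ∈ Icc 1 a, (i - #(filter (fun l => s l < i) (Icc 1 k))) with hA
    set B := ∏ i ∈ Ioc a N, (i - k) with hB
    set C := ∏ i ∈ Ioc a N, (i - k - 1) with hC
    set Pk := ∏ j ∈ Icc 1 k, (s j - j + 1) with hPk
    have h1 : (N - k).factorial = (N - k) * (N - (k+1)).factorial := by
      rw [(by omega : N - k = (N - (k+1)) + 1), Nat.factorial_succ]
    rw [h1] at hIH
    have key : (∏ i ∈ Icc 1 N, (i - ((Icc 1 (k+1)).filter (fun l => s l < i)).card)) * (N - k)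
        = ((N - (k+1)).factorial * ∏ j ∈ Icc 1 (k+1), (s j - j + 1)) * (N - k) := by
      rw [hsplit, hP1, hP2, Finset.prod_Icc_succ_top (by omega : 1 ≤ k + 1), ← hPk,
        ← haa, (by omega : a - (k+1) + 1 = a - k)]
      calc A * C * (N - k) = A * (C * (N - k)) := by ring
        _ = A * (B * (a - k)) := by rw [← h2]
        _ = A * B * (a - k) := by ring
        _ = (N - k) * (N - (k+1)).factorial * Pk * (a - k) := by rw [hIH]
        _ = (N - (k+1)).factorial * (Pk * (a - k)) * (N - k) := by ring
    have hpos : 0 < N - k := by omega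
    exact Nat.eq_of_mul_eq_mul_right hpos key

lemma schain (k : ℕ) (s : ℕ → ℕ) (hmono : ∀ l ∈ Finset.Icc 1 (k-1), s l ≤ s (l+1)) :
    ∀ a b, 1 ≤ a → a ≤ b → b ≤ k → s a ≤ s b := by
  intro a b ha hab
  induction b, hab using Nat.le_induction with
  | base => intro _; exact le_rfl
  | succ b hab ih =>
    intro hbk
    exact le_trans (ih (by omega)) (hmono b (by simp only [mem_Icc]; omega))

lemma downward_Icc (k : ℕ) (s : ℕ → ℕ)
    (hm : ∀ a b, 1 ≤ a → a ≤ b → b ≤ k → s a ≤ s b) (i : ℕ) :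
    (Icc 1 k).filter (fun l => s l < i)
      = Icc 1 (((Icc 1 k).filter (fun l => s l < i)).card) := by
  set F := (Icc 1 k).filter (fun l => s l < i) with hF
  rcases F.eq_empty_or_nonempty with he | hne
  · rw [he]; simp
  · obtain ⟨M, hMmem, hMle⟩ : ∃ M, M ∈ F ∧ ∀ x ∈ F, x ≤ M :=
      ⟨F.max' hne, F.max'_mem hne, fun x hx => F.le_max' x hx⟩
    have hM := hMmem
    rw [hF, mem_filter, mem_Icc] at hM
    have hFM : F = Icc 1 M := by
      ext x
      constructor
      · intro hx
        have hx' := hx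
        rw [hF, mem_filter, mem_Icc] at hx'
        exact mem_Icc.mpr ⟨hx'.1.1, hMle x hx⟩
      · intro hx
        rw [mem_Icc] at hx
        rw [hF, mem_filter, mem_Icc]
        exact ⟨⟨hx.1, le_trans hx.2 hM.1.2⟩,
          lt_of_le_of_lt (hm x M hx.1 hx.2 hM.1.2) hM.2⟩
    rw [hFM, Nat.card_Icc, (by omega : M + 1 - 1 = M)]

/-- The predicate describing the rank constraints of lucky permutations without threshold. -/
def Qpred (n k : ℕ) (s : ℕ → ℕ) (i r : ℕ) : Prop :=
  (i = n ∧ r ≤ k) ∨ (i ≠ n ∧ ((Icc 1 k).filter (fun l => s l < i)).card < r)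

theorem lucky_without_threshold_card (n k : ℕ) (hk : 1 ≤ k) (hkn : k < n) (s : ℕ → ℕ)
    (hmono : ∀ l ∈ Finset.Icc 1 (k - 1), s l ≤ s (l + 1))
    (hbdd : ∀ l ∈ Finset.Icc 1 k, l ≤ s l ∧ s l ≤ n - 1) :
    (Nat.card {π : Equiv.Perm (Fin n) //
        Lucky n k s π ∧ ¬∃ l, IsThreshold n k s π l} : ℝ) =
      (k : ℝ) * (Nat.factorial (n - k - 1) : ℝ) *
        ∏ j ∈ Finset.Icc 1 k, ((s j : ℝ) - j + 1) := by
  have hn1 : 1 ≤ n := by omega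
  have hm : ∀ a b, 1 ≤ a → a ≤ b → b ≤ k → s a ≤ s b := schain k s hmono
  have hbdd' : ∀ l, 1 ≤ l → l ≤ k → l ≤ s l ∧ s l ≤ n - 1 :=
    fun l h1 h2 => hbdd l (mem_Icc.mpr ⟨h1, h2⟩)
  set L : ℕ → ℕ := fun i => ((Icc 1 k).filter (fun l => s l < i)).card with hL
  -- membership facts about L
  have hLle : ∀ i l, l ∈ (Icc 1 k).filter (fun l => s l < i) → l ≤ L i := by
    intro i l hl
    rw [downward_Icc k s hm i, mem_Icc] at hl
    exact hl.2
  have hLmem : ∀ i, 1 ≤ L i → L i ∈ (Icc 1 k).filter (fun l => s l < i) := by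
    intro i h1
    rw [downward_Icc k s hm i]
    exact mem_Icc.mpr ⟨h1, le_rfl⟩
  have hLk : ∀ i, L i ≤ k := by
    intro i
    have : (Icc 1 k).filter (fun l => s l < i) ⊆ Icc 1 k := Finset.filter_subset _ _
    calc L i ≤ (Icc 1 k).card := Finset.card_le_card this
    _ = k := by rw [Nat.card_Icc]; omega
  -- the set equivalence
  have hequiv : ∀ π : Equiv.Perm (Fin n),
      (Lucky n k s π ∧ ¬∃ l, IsThreshold n k s π l) ↔
      (∀ i ∈ Icc 1 n, Qpred n k s i (rho n π i)) := by
    intro π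
    constructor
    · rintro ⟨hl, hno⟩ i hi
      rw [mem_Icc] at hi
      rcases eq_or_ne i n with heq | hne
      · left
        refine ⟨heq, ?_⟩
        rw [heq, rho_top n π hn1]
        simp only [Lucky] at hl
        rwa [if_neg hno] at hl
      · right
        refine ⟨hne, ?_⟩
        by_contra hcon
        push_neg at hcon
        rw [show ((Icc 1 k).filter (fun l => s l < i)).card = L i from by simp only [hL]] at hcon
        have hL1 : 1 ≤ L i := le_trans (rho_pos n π i hi.1) hcon
        have hmemL := hLmem i hL1
        rw [mem_filter, mem_Icc] at hmemL
        apply hno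
        refine ⟨L i, hmemL.1.1, hmemL.1.2, i, ?_, ?_, hcon⟩
        · rw [sExt, if_neg (by omega : ¬ L i = k + 1)]
          exact hmemL.2
        · rw [sExt]
          split
          · omega
          · -- L i + 1 ≤ k
            have hlk : L i + 1 ≤ k := by omega
            by_contra hcon2
            push_neg at hcon2
            have : L i + 1 ∈ (Icc 1 k).filter (fun l => s l < i) := by
              rw [mem_filter, mem_Icc]
              exact ⟨⟨by omega, hlk⟩, by omega⟩
            have := hLle i _ this
            omega
    · intro hQ
      have hno : ¬∃ l, IsThreshold n k s π l := by
        rintro ⟨l, hl1, hl2, i, he1, he2, he3⟩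
        rw [sExt, if_neg (by omega : ¬ l = k + 1)] at he1
        have hsl := hbdd' l hl1 hl2
        have hiub : i ≤ n - 1 := by
          rw [sExt] at he2
          rcases eq_or_ne (l+1) (k+1) with h | h
          · rwa [if_pos h] at he2
          · rw [if_neg h] at he2
            exact le_trans he2 (hbdd' (l+1) (by omega) (by omega)).2
        have hilb : 1 ≤ i := by omega
        have := hQ i (mem_Icc.mpr ⟨hilb, by omega⟩)
        rcases this with ⟨h, _⟩ | ⟨_, h⟩
        · omega
        · have hlL : l ≤ L i := hLle i l (by rw [mem_filter, mem_Icc]; exact ⟨⟨hl1, hl2⟩, he1⟩)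
          simp only [hL] at hlL
          omega
      refine ⟨?_, hno⟩
      simp only [Lucky]
      rw [if_neg hno, ← rho_top n π hn1]
      have := hQ n (mem_Icc.mpr ⟨hn1, le_rfl⟩)
      rcases this with ⟨_, h⟩ | ⟨h, _⟩
      · exact h
      · omega
  haveI : ∀ i, DecidablePred (Qpred n k s i) := fun i r => by
    unfold Qpred; infer_instance
  have hcount := count_rho n (Qpred n k s)
  rw [Nat.card_congr (Equiv.subtypeEquivRight hequiv), hcount]
  -- compute the product
  have hins : Icc 1 n = insert n (Icc 1 (n-1)) := by
    ext x; simp only [mem_insert, mem_Icc]; omega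
  rw [hins, Finset.prod_insert (by simp only [mem_Icc]; omega)]
  have hfn : ((Icc 1 n).filter (Qpred n k s n)).card = k := by
    have : (Icc 1 n).filter (Qpred n k s n) = Icc 1 k := by
      ext r
      simp only [mem_filter, mem_Icc, Qpred, true_and, ne_eq, not_true, false_and, or_false]
      omega
    rw [this, Nat.card_Icc]
    omega
  have hmono' : ∀ l, 1 ≤ l → l + 1 ≤ k → s l ≤ s (l+1) :=
    fun l h1 h2 => hmono l (mem_Icc.mpr ⟨h1, by omega⟩)
  have hterm : ∀ i ∈ Icc 1 (n-1), ((Icc 1 i).filter (Qpred n k s i)).card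
      = i - ((Icc 1 k).filter (fun l => s l < i)).card := by
    intro i hi
    rw [mem_Icc] at hi
    have hLik : ((Icc 1 k).filter (fun l => s l < i)).card ≤ k := by
      have := hLk i
      simpa only [hL] using this
    have hflt : (Icc 1 i).filter (Qpred n k s i)
        = Ioc (((Icc 1 k).filter (fun l => s l < i)).card) i := by
      ext r
      simp only [Qpred, mem_filter, mem_Icc, mem_Ioc]
      omega
    rw [hflt, Nat.card_Ioc]
  have hprod : ∏ i ∈ Icc 1 (n-1), ((Icc 1 i).filter (Qpred n k s i)).card
      = (n - k - 1).factorial * ∏ j ∈ Icc 1 k, (s j - j + 1) := by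
    rw [Finset.prod_congr rfl hterm,
      telescope k s (n-1) hmono' (fun l h1 h2 => hbdd' l h1 h2),
      (by omega : n - 1 - k = n - k - 1)]
  rw [hfn, hprod]
  have hcast : ((∏ j ∈ Icc 1 k, (s j - j + 1) : ℕ) : ℝ)
      = ∏ j ∈ Icc 1 k, ((s j : ℝ) - (j : ℝ) + 1) := by
    rw [Nat.cast_prod]
    apply Finset.prod_congr rfl
    intro j hj
    rw [mem_Icc] at hj
    have hjs := (hbdd' j hj.1 hj.2).1
    rw [Nat.cast_add, Nat.cast_sub hjs, Nat.cast_one]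
  rw [Nat.cast_mul, Nat.cast_mul, hcast, ← mul_assoc]
end Secretary
end

section
/- Let w_0 = (x_1,...,x_k) be a non-decreasing sequence of integers with l ≤ x_l ≤ n-1 for every l ∈ {1,...,k}. A permutation π of {1,...,n} is lucky for w_0 and has no w_0-threshold if and only if the following two conditions hold: (i) there exists ι ∈ {1,...,k} with π(n) = ι; (ii) writing {1,...,k+1} \ {ι} = {y_1,...,y_k} with y_1 < y_2 < ... < y_k, one has y_j ∈ π({1,...,x_j}) for every j ∈ {1,...,k}. -/
namespace Secretary

lemma sortY_eq (k ι : ℕ) (hι1 : 1 ≤ ι) (hιk : ι ≤ k) :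
    ((Finset.Icc 1 (k+1)).erase ι).sort (· ≤ ·)
      = List.range' 1 (ι-1) ++ List.range' (ι+1) (k+1-ι) := by
  have hnd : (List.range' 1 (ι-1) ++ List.range' (ι+1) (k+1-ι)).Nodup := by
    rw [List.nodup_append]
    refine ⟨List.nodup_range', List.nodup_range', ?_⟩
    intro a ha b hb
    rw [List.mem_range'_1] at ha hb
    omega
  have hsorted : (List.range' 1 (ι-1) ++ List.range' (ι+1) (k+1-ι)).Pairwise (· ≤ ·) := by
    rw [List.pairwise_append]
    refine ⟨(List.pairwise_lt_range').imp (fun h => le_of_lt h),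
      (List.pairwise_lt_range').imp (fun h => le_of_lt h), ?_⟩
    intro a ha b hb
    rw [List.mem_range'_1] at ha hb
    omega
  refine List.Perm.eq_of_pairwise' (Finset.pairwise_sort _ _) hsorted ?_
  rw [List.perm_ext_iff_of_nodup (Finset.sort_nodup _ _) hnd]
  intro a
  rw [Finset.mem_sort, Finset.mem_erase, Finset.mem_Icc, List.mem_append,
    List.mem_range'_1, List.mem_range'_1]
  omega

lemma sortY_getD (k ι : ℕ) (hι1 : 1 ≤ ι) (hιk : ι ≤ k) (j : ℕ) (hj1 : 1 ≤ j) (hjk : j ≤ k) :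
    (((Finset.Icc 1 (k+1)).erase ι).sort (· ≤ ·)).getD (j-1) 0
      = if j < ι then j else j + 1 := by
  rw [sortY_eq k ι hι1 hιk]
  have hjl : j - 1 < (List.range' 1 (ι-1) ++ List.range' (ι+1) (k+1-ι)).length := by
    simp only [List.length_append, List.length_range']; omega
  rw [List.getD_eq_getElem _ _ hjl]
  by_cases h : j < ι
  · rw [if_pos h]
    have h1 : j - 1 < (List.range' 1 (ι-1)).length := by
      simp only [List.length_range']; omega
    rw [List.getElem_append_left h1, List.getElem_range']
    omega
  · rw [if_neg h]
    have h1 : (List.range' 1 (ι-1)).length ≤ j - 1 := by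
      simp only [List.length_range']; omega
    rw [List.getElem_append_right h1, List.getElem_range']
    simp only [List.length_range']
    omega

end Secretary


open Finset

namespace Secretary

lemma pv_range (n : ℕ) (π : Equiv.Perm (Fin n)) (i : ℕ) (h1 : 1 ≤ i) (h2 : i ≤ n) :
    1 ≤ pv n π i ∧ pv n π i ≤ n := by
  have h : i - 1 < n := by omega
  unfold pv
  rw [dif_pos h]
  exact ⟨Nat.succ_le_succ (Nat.zero_le _), (π ⟨i - 1, h⟩).isLt⟩

lemma pv_inj (n : ℕ) (π : Equiv.Perm (Fin n)) (i₁ i₂ : ℕ) (h11 : 1 ≤ i₁) (h12 : i₁ ≤ n)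
    (h21 : 1 ≤ i₂) (h22 : i₂ ≤ n) (h : pv n π i₁ = pv n π i₂) : i₁ = i₂ := by
  have ha : i₁ - 1 < n := by omega
  have hb : i₂ - 1 < n := by omega
  unfold pv at h
  rw [dif_pos ha, dif_pos hb] at h
  have h2 : π ⟨i₁ - 1, ha⟩ = π ⟨i₂ - 1, hb⟩ := Fin.ext (by omega)
  have h3 := π.injective h2
  have h4 : i₁ - 1 = i₂ - 1 := congrArg Fin.val h3
  omega

lemma pv_surj (n : ℕ) (π : Equiv.Perm (Fin n)) (v : ℕ) (h1 : 1 ≤ v) (h2 : v ≤ n) :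
    ∃ i, 1 ≤ i ∧ i ≤ n ∧ pv n π i = v := by
  have hv : v - 1 < n := by omega
  refine ⟨(π.symm ⟨v - 1, hv⟩ : ℕ) + 1, Nat.succ_le_succ (Nat.zero_le _),
    (π.symm ⟨v - 1, hv⟩).isLt, ?_⟩
  have h : (π.symm ⟨v - 1, hv⟩ : ℕ) + 1 - 1 < n := by
    simpa using (π.symm ⟨v - 1, hv⟩).isLt
  unfold pv
  rw [dif_pos h]
  have he : (⟨(π.symm ⟨v - 1, hv⟩ : ℕ) + 1 - 1, h⟩ : Fin n) = π.symm ⟨v - 1, hv⟩ :=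
    Fin.ext (by simp)
  rw [he, Equiv.apply_symm_apply]
  simp only [Fin.val_mk]
  omega

lemma smono_aux (k : ℕ) (s : ℕ → ℕ) (hmono : ∀ l ∈ Finset.Icc 1 (k - 1), s l ≤ s (l + 1)) :
    ∀ b, b ≤ k → ∀ a, 1 ≤ a → a ≤ b → s a ≤ s b := by
  intro b
  induction b with
  | zero => intro _ a ha hab; omega
  | succ m ih =>
    intro hbk a ha hab
    rcases Nat.lt_or_ge a (m+1) with h | h
    · have h1 : s a ≤ s m := ih (by omega) a ha (by omega)
      have h2 : s m ≤ s (m+1) := hmono m (Finset.mem_Icc.mpr ⟨by omega, by omega⟩)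
      omega
    · have hae : a = m + 1 := by omega
      rw [hae]

lemma noThreshold_of (n k : ℕ) (hk : 1 ≤ k) (hkn : k < n) (s : ℕ → ℕ)
    (hmono : ∀ l ∈ Finset.Icc 1 (k - 1), s l ≤ s (l + 1))
    (hbdd : ∀ l ∈ Finset.Icc 1 k, l ≤ s l ∧ s l ≤ n - 1) (π : Equiv.Perm (Fin n))
    (ι : ℕ) (hι1 : 1 ≤ ι) (hιk : ι ≤ k) (hpn : pv n π n = ι)
    (hy : ∀ j, 1 ≤ j → j ≤ k →
      ∃ q, 1 ≤ q ∧ q ≤ s j ∧ pv n π q = (if j < ι then j else j + 1)) :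
    ¬∃ l, IsThreshold n k s π l := by
  rintro ⟨l, hT⟩
  simp only [IsThreshold, IsElem] at hT
  obtain ⟨hl1, hlk, i, hi1, hi2, hrho⟩ := hT
  have hsl : sExt n k s l = s l := by unfold sExt; rw [if_neg (by omega)]
  rw [hsl] at hi1
  have hlb := hbdd l (Finset.mem_Icc.mpr ⟨hl1, hlk⟩)
  have hiub : i ≤ n - 1 := by
    by_cases h : l = k
    · have he : sExt n k s (l+1) = n - 1 := by unfold sExt; rw [if_pos (by omega)]
      rw [he] at hi2; exact hi2
    · have h1 : sExt n k s (l+1) = s (l+1) := by unfold sExt; rw [if_neg (by omega)]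
      have h2 := hbdd (l+1) (Finset.mem_Icc.mpr ⟨by omega, by omega⟩)
      omega
  have hi_lb : 1 ≤ i := by omega
  have hin : i ≤ n := by omega
  have hine : i ≠ n := by omega
  have hex : ∀ j ∈ Finset.Icc 1 l,
      ∃ q, 1 ≤ q ∧ q ≤ s j ∧ pv n π q = (if j < ι then j else j + 1) := by
    intro j hj
    rw [Finset.mem_Icc] at hj
    exact hy j hj.1 (le_trans hj.2 hlk)
  choose! p hp1 hp2 hp3 using hex
  have hpi : ∀ j ∈ Finset.Icc 1 l, p j < i := by
    intro j hj
    have hj' := Finset.mem_Icc.mp hj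
    have hs := smono_aux k s hmono l hlk j hj'.1 hj'.2
    have := hp2 j hj
    omega
  have hpvi := pv_range n π i hi_lb hin
  have hvι : pv n π i ≠ ι := by
    intro h
    exact hine (pv_inj n π i n hi_lb hin (by omega) le_rfl (by rw [h, hpn]))
  have hvy : ∀ m ∈ Finset.Icc 1 l, pv n π i ≠ (if m < ι then m else m + 1) := by
    intro m hm h
    have hm' := Finset.mem_Icc.mp hm
    have h2 : pv n π i = pv n π (p m) := by rw [h, ← hp3 m hm]
    have hpm1 := hp1 m hm
    have hbm := hbdd m (Finset.mem_Icc.mpr ⟨hm'.1, le_trans hm'.2 hlk⟩)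
    have hpmu : p m ≤ n := by have := hp2 m hm; omega
    have heq := pv_inj n π i (p m) hi_lb hin hpm1 hpmu h2
    have := hpi m hm
    omega
  have hvgt : ∀ j ∈ Finset.Icc 1 l, (if j < ι then j else j + 1) < pv n π i := by
    intro j hj
    have hj' := Finset.mem_Icc.mp hj
    by_contra hcon
    push_neg at hcon
    have hyjb : (if j < ι then j else j + 1) ≤ l + 1 := by split <;> omega
    have hvle : pv n π i ≤ l + 1 := le_trans hcon hyjb
    rcases lt_or_ge (pv n π i) ι with hlt | hge
    · have hvl : pv n π i ≤ l := by
        by_contra hx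
        push_neg at hx
        have hv1 : pv n π i = l + 1 := by omega
        have hjlt : j < ι := by omega
        rw [if_pos hjlt] at hcon
        omega
      have hne := hvy (pv n π i) (Finset.mem_Icc.mpr ⟨hpvi.1, hvl⟩)
      rw [if_pos hlt] at hne
      exact hne rfl
    · have hgt : ι < pv n π i := lt_of_le_of_ne hge (Ne.symm hvι)
      have hne := hvy (pv n π i - 1) (Finset.mem_Icc.mpr ⟨by omega, by omega⟩)
      rw [if_neg (by omega)] at hne
      omega
  have hpinj : Set.InjOn p (Finset.Icc 1 l) := by
    intro a ha b hb hab
    rw [Finset.mem_coe] at ha hb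
    have h1 : (if a < ι then a else a+1) = (if b < ι then b else b+1) := by
      rw [← hp3 a ha, ← hp3 b hb, hab]
    have ha' := Finset.mem_Icc.mp ha
    have hb' := Finset.mem_Icc.mp hb
    split_ifs at h1 <;> omega
  have hiT : i ∉ (Finset.Icc 1 l).image p := by
    simp only [Finset.mem_image]
    rintro ⟨j, hj, hje⟩
    have := hpi j hj
    omega
  have hsub : insert i ((Finset.Icc 1 l).image p) ⊆
      (Finset.Icc 1 i).filter fun j => pv n π j ≤ pv n π i := by
    intro x hx
    rcases Finset.mem_insert.mp hx with h | h
    · subst h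
      exact Finset.mem_filter.mpr ⟨Finset.mem_Icc.mpr ⟨hi_lb, le_rfl⟩, le_rfl⟩
    · obtain ⟨j, hj, hje⟩ := Finset.mem_image.mp h
      subst hje
      refine Finset.mem_filter.mpr ⟨Finset.mem_Icc.mpr ⟨hp1 j hj, le_of_lt (hpi j hj)⟩, ?_⟩
      rw [hp3 j hj]
      exact le_of_lt (hvgt j hj)
  have hcard : l + 1 ≤ rho n π i := by
    have h1 : (insert i ((Finset.Icc 1 l).image p)).card = l + 1 := by
      rw [Finset.card_insert_of_notMem hiT, Finset.card_image_of_injOn hpinj,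
        Nat.card_Icc]
      omega
    unfold rho
    calc l + 1 = _ := h1.symm
      _ ≤ _ := Finset.card_le_card hsub
  omega

lemma pos_of_noThreshold (n k : ℕ) (hk : 1 ≤ k) (hkn : k < n) (s : ℕ → ℕ)
    (hbdd : ∀ l ∈ Finset.Icc 1 k, l ≤ s l ∧ s l ≤ n - 1) (π : Equiv.Perm (Fin n))
    (ι : ℕ) (hι1 : 1 ≤ ι) (hιk : ι ≤ k) (hpn : pv n π n = ι)
    (hnt : ¬∃ l, IsThreshold n k s π l) :
    ∀ j, 1 ≤ j → j ≤ k →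
      ∃ q, 1 ≤ q ∧ q ≤ s j ∧ pv n π q = (if j < ι then j else j + 1) := by
  intro j hj1 hjk
  by_contra hc
  push_neg at hc
  have hy1 : 1 ≤ (if j < ι then j else j + 1) ∧ (if j < ι then j else j + 1) ≤ k + 1 := by
    split <;> omega
  obtain ⟨i, hi1, hin, hpvi⟩ := pv_surj n π _ hy1.1 (by omega)
  have hisj : s j < i := by
    by_contra hx
    push_neg at hx
    exact hc i hi1 hx hpvi
  have hine : i ≠ n := by
    intro h
    rw [h, hpn] at hpvi
    split at hpvi <;> omega
  have hjF : j ∈ (Finset.Icc 1 k).filter (fun m => s m < i) :=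
    Finset.mem_filter.mpr ⟨Finset.mem_Icc.mpr ⟨hj1, hjk⟩, hisj⟩
  have hFne : ((Finset.Icc 1 k).filter (fun m => s m < i)).Nonempty := ⟨j, hjF⟩
  set l := ((Finset.Icc 1 k).filter (fun m => s m < i)).max' hFne with hl
  have hlF := ((Finset.Icc 1 k).filter (fun m => s m < i)).max'_mem hFne
  rw [Finset.mem_filter, Finset.mem_Icc] at hlF
  obtain ⟨⟨hl1, hlk⟩, hsl⟩ := hlF
  have hjl : j ≤ l := Finset.le_max' _ j hjF
  have hi2 : i ≤ sExt n k s (l + 1) := by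
    by_cases h : l = k
    · unfold sExt
      rw [if_pos (by omega)]
      omega
    · unfold sExt
      rw [if_neg (by omega)]
      by_contra hx
      push_neg at hx
      have hmem : l + 1 ∈ (Finset.Icc 1 k).filter (fun m => s m < i) :=
        Finset.mem_filter.mpr ⟨Finset.mem_Icc.mpr ⟨by omega, by omega⟩, hx⟩
      have := Finset.le_max' _ _ hmem
      omega
  have hT : ((Finset.Icc 1 (if j < ι then j else j + 1)).erase ι).card = j := by
    by_cases h : j < ι
    · rw [if_pos h, Finset.erase_eq_of_notMem (by rw [Finset.mem_Icc]; omega),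
        Nat.card_Icc]
      omega
    · rw [if_neg h, Finset.card_erase_of_mem (Finset.mem_Icc.mpr ⟨hι1, by omega⟩),
        Nat.card_Icc]
      omega
  have hmap : ∀ m ∈ (Finset.Icc 1 i).filter (fun q => pv n π q ≤ pv n π i),
      pv n π m ∈ (Finset.Icc 1 (if j < ι then j else j + 1)).erase ι := by
    intro m hm
    rw [Finset.mem_filter, Finset.mem_Icc] at hm
    obtain ⟨⟨hm1, hmi⟩, hle⟩ := hm
    have hmn : m ≤ n := le_trans hmi hin
    have hr := pv_range n π m hm1 hmn
    refine Finset.mem_erase.mpr ⟨?_, Finset.mem_Icc.mpr ⟨hr.1, by rw [← hpvi]; exact hle⟩⟩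
    intro hmι
    have hmn' : m = n := pv_inj n π m n hm1 hmn (by omega) le_rfl (by rw [hmι, hpn])
    omega
  have hrho : rho n π i ≤ j := by
    rw [← hT]
    unfold rho
    apply Finset.card_le_card_of_injOn (pv n π) hmap
    intro a ha b hb hab
    simp only [Finset.coe_filter, Set.mem_setOf_eq, Finset.mem_Icc] at ha hb
    exact pv_inj n π a b ha.1.1 (le_trans ha.1.2 hin) hb.1.1 (le_trans hb.1.2 hin) hab
  apply hnt
  refine ⟨l, hl1, hlk, i, ?_, hi2, le_trans hrho hjl⟩
  unfold sExt
  rw [if_neg (by omega)]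
  exact hsl


theorem lucky_without_threshold_iff (n k : ℕ) (hk : 1 ≤ k) (hkn : k < n) (s : ℕ → ℕ)
    (hmono : ∀ l ∈ Finset.Icc 1 (k - 1), s l ≤ s (l + 1))
    (hbdd : ∀ l ∈ Finset.Icc 1 k, l ≤ s l ∧ s l ≤ n - 1) (π : Equiv.Perm (Fin n)) :
    (Lucky n k s π ∧ ¬∃ l, IsThreshold n k s π l) ↔
      ∃ ι ∈ Finset.Icc 1 k, pv n π n = ι ∧
        ∀ j ∈ Finset.Icc 1 k,
          (((Finset.Icc 1 (k + 1)).erase ι).sort (· ≤ ·)).getD (j - 1) 0 ∈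
            (Finset.Icc 1 (s j)).image (pv n π) := by
  have hn2 : 2 ≤ n := by omega
  constructor
  · rintro ⟨hl, hnt⟩
    unfold Lucky at hl
    rw [if_neg hnt] at hl
    have hpn1 := (pv_range n π n (by omega) le_rfl).1
    refine ⟨pv n π n, Finset.mem_Icc.mpr ⟨hpn1, hl⟩, rfl, ?_⟩
    intro j hj
    rw [Finset.mem_Icc] at hj
    rw [sortY_getD k (pv n π n) hpn1 hl j hj.1 hj.2]
    obtain ⟨q, hq1, hq2, hq3⟩ :=
      pos_of_noThreshold n k hk hkn s hbdd π (pv n π n) hpn1 hl rfl hnt j hj.1 hj.2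
    exact Finset.mem_image.mpr ⟨q, Finset.mem_Icc.mpr ⟨hq1, hq2⟩, hq3⟩
  · rintro ⟨ι, hι, hpn, hy⟩
    rw [Finset.mem_Icc] at hι
    have hy' : ∀ j, 1 ≤ j → j ≤ k →
        ∃ q, 1 ≤ q ∧ q ≤ s j ∧ pv n π q = (if j < ι then j else j + 1) := by
      intro j hj1 hjk
      have hmem := hy j (Finset.mem_Icc.mpr ⟨hj1, hjk⟩)
      rw [sortY_getD k ι hι.1 hι.2 j hj1 hjk] at hmem
      obtain ⟨q, hq, hq3⟩ := Finset.mem_image.mp hmem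
      rw [Finset.mem_Icc] at hq
      exact ⟨q, hq.1, hq.2, hq3⟩
    have hnt := noThreshold_of n k hk hkn s hmono hbdd π ι hι.1 hι.2 hpn hy'
    refine ⟨?_, hnt⟩
    unfold Lucky
    rw [if_neg hnt, hpn]
    exact hι.2
end Secretary
end

section
/- For every w = (x_1,...,x_k) ∈ X^{(k)} and every l ∈ {0,1,...,k}, writing x̃_i := x_i - i + 1 for i ∈ {1,...,k}, one has D_l(σ^l(w)) = Σ_{i=l}^{k-1} (Π_{j=l+1}^{i} x̃_j) · d_i(x̃_{i+1}) + (Π_{j=l+1}^{k} x̃_j) · δ_{k,n}, where empty sums are 0 and empty products are 1. -/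
open Finset

namespace Secretary

lemma Cb_natCast (a b : ℕ) : Cb a b = (a.choose b : ℝ) := by
  unfold Cb
  by_cases h : (b : ℤ) ≤ (a : ℤ)
  · simp [h, Int.toNat_natCast]
  · have hb : a < b := by exact_mod_cast not_le.mp h
    simp [h, Nat.choose_eq_zero_of_lt hb]



lemma Cb_pos (a b : ℕ) (h : b ≤ a) : 0 < Cb a b := by
  rw [Cb_natCast]
  exact_mod_cast Nat.choose_pos h

lemma choose_mul_choose (n k x : ℕ) (hk : k ≤ n) (hx : x ≤ n) :
    (n.choose k : ℝ) * ((n - k).choose x) = (n.choose x : ℝ) * ((n - x).choose k) := by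
  by_cases h : k + x ≤ n
  · have h1 : x ≤ n - k := by omega
    have h2 : k ≤ n - x := by omega
    rw [Nat.cast_choose ℝ hk, Nat.cast_choose ℝ hx, Nat.cast_choose ℝ h1, Nat.cast_choose ℝ h2]
    have e1 : n - k - x = n - x - k := by omega
    rw [e1]
    have f1 : (Nat.factorial k : ℝ) ≠ 0 := by exact_mod_cast Nat.factorial_ne_zero k
    have f2 : (Nat.factorial x : ℝ) ≠ 0 := by exact_mod_cast Nat.factorial_ne_zero x
    have f3 : (Nat.factorial (n - k) : ℝ) ≠ 0 := by exact_mod_cast Nat.factorial_ne_zero _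
    have f4 : (Nat.factorial (n - x) : ℝ) ≠ 0 := by exact_mod_cast Nat.factorial_ne_zero _
    have f5 : (Nat.factorial (n - x - k) : ℝ) ≠ 0 := by exact_mod_cast Nat.factorial_ne_zero _
    field_simp
  · have h1 : n - k < x := by omega
    have h2 : n - x < k := by omega
    rw [Nat.choose_eq_zero_of_lt h1, Nat.choose_eq_zero_of_lt h2]
    simp

lemma Cb_of_nonneg_zero (a : ℤ) (h : 0 ≤ a) : Cb a 0 = 1 := by
  unfold Cb
  rw [if_pos ⟨le_refl 0, h⟩]
  simp

lemma Cb_eq_zero (a b : ℤ) (h : a < b) : Cb a b = 0 := by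
  unfold Cb
  rw [if_neg]
  intro ⟨h1, h2⟩
  omega

lemma rr_natCast (n k l x : ℕ) (hl : 1 ≤ l) :
    rr n k (l : ℤ) x = ((Nat.factorial (x - l - 1) : ℝ) / (Nat.factorial x : ℝ)) *
      (1 - (1 / ((l : ℝ) * Cb n x)) *
        ∑ j ∈ Finset.range (l + 1),
          ((l : ℝ) - j) * Cb k j * Cb ((n : ℤ) - k) ((x : ℤ) - j)) := by
  unfold rr
  rw [if_neg (by exact_mod_cast (by omega : ¬ (l : ℤ) < 0)),
      if_neg (by exact_mod_cast (by omega : ¬ (l : ℤ) = 0))]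
  norm_num [Int.toNat_natCast]

lemma keyA0 (n k x : ℕ) (hk : 1 ≤ k) (hkn : k < n) (hx1 : 1 ≤ x) :
    rr n k ((0 : ℤ) - 1) x - ((x : ℝ) - 0) * rr n k 0 x = d n k 0 x := by
  have h0 : rr n k ((0:ℤ) - 1) x = 0 := by unfold rr; norm_num
  rw [h0]
  unfold rr d
  norm_num
  have hx : (x : ℝ) ≠ 0 := by exact_mod_cast (by omega : x ≠ 0)
  have hC : Cb n k ≠ 0 := ne_of_gt (Cb_pos n k hkn.le)
  have hn : (n : ℝ) ≠ 0 := by exact_mod_cast (by omega : n ≠ 0)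
  field_simp
  ring

lemma keyA1 (n k x : ℕ) (hk : 1 ≤ k) (hkn : k < n) (hx1 : 2 ≤ x) (hx2 : x ≤ n - 1) :
    rr n k ((1 : ℤ) - 1) x - ((x : ℝ) - 1) * rr n k 1 x = d n k 1 (x - 1) := by
  obtain ⟨y, rfl⟩ : ∃ y, x = y + 2 := ⟨x - 2, by omega⟩
  have e0 : ((1:ℤ) - 1) = 0 := by norm_num
  rw [e0]
  unfold rr d
  norm_num
  rw [Finset.sum_range_succ, Finset.sum_range_one,
    Finset.sum_Icc_succ_top (by omega : 1 ≤ y + 2)]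
  have eA : Cb ((n:ℤ) - ((y:ℤ) + 2) - 1) ((k:ℤ)) = ((n - (y + 2) - 1).choose k : ℝ) := by
    have h : (n:ℤ) - ((y:ℤ) + 2) - 1 = ((n - (y+2) - 1 : ℕ) : ℤ) := by push_cast; omega
    rw [h, Cb_natCast]
  have eB : Cb ((n:ℤ) - ((y:ℤ) + 1 + 1) - 1) ((k:ℤ) - 1) = ((n - (y + 2) - 1).choose (k-1) : ℝ) := by
    have h1 : (n:ℤ) - ((y:ℤ) + 1 + 1) - 1 = ((n - (y+2) - 1 : ℕ) : ℤ) := by push_cast; omega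
    have h2 : (k:ℤ) - 1 = ((k - 1 : ℕ) : ℤ) := by push_cast [hk]; ring
    rw [h1, h2, Cb_natCast]
  have eCK : Cb (n:ℤ) (k:ℤ) = (n.choose k : ℝ) := Cb_natCast n k
  have eK0 : Cb (k:ℤ) (0:ℤ) = 1 := by
    have : (0:ℤ) = ((0:ℕ):ℤ) := rfl
    rw [this, Cb_natCast]; simp
  have eNKX : Cb ((n:ℤ) - (k:ℤ)) ((y:ℤ) + 2) = ((n - k).choose (y + 2) : ℝ) := by
    have h1 : (n:ℤ) - (k:ℤ) = ((n - k : ℕ) : ℤ) := by push_cast [hkn.le]; ring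
    have h2 : (y:ℤ) + 2 = ((y + 2 : ℕ) : ℤ) := by push_cast; ring
    rw [h1, h2, Cb_natCast]
  have eCX : Cb (n:ℤ) ((y:ℤ) + 2) = (n.choose (y + 2) : ℝ) := by
    have h2 : (y:ℤ) + 2 = ((y + 2 : ℕ) : ℤ) := by push_cast; ring
    rw [h2, Cb_natCast]
  norm_num
  rw [eA, eB, eCK, eNKX, eCX, eK0]
  generalize (∑ j ∈ Finset.Icc 1 (y + 1), Cb ((n:ℤ) - (j:ℤ) - 1) ((k:ℤ) - 1) / (j : ℝ)) = S
  have hP : ((n - (y + 2) - 1).choose k : ℝ) + ((n - (y + 2) - 1).choose (k - 1) : ℝ)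
      = ((n - (y + 2)).choose k : ℝ) := by
    have h1 : n - (y + 2) = (n - (y + 2) - 1) + 1 := by omega
    have h2 : k = (k - 1) + 1 := by omega
    rw [h1]
    nth_rewrite 1 [h2]
    nth_rewrite 3 [h2]
    rw [Nat.choose_succ_succ]
    push_cast
    ring
  have hV : (n.choose k : ℝ) * ((n - k).choose (y + 2)) 
      = (n.choose (y + 2) : ℝ) * ((n - (y + 2)).choose k) := 
    choose_mul_choose n k (y + 2) hkn.le (by omega)
  have hCK : (n.choose k : ℝ) ≠ 0 := by
    exact_mod_cast (Nat.choose_pos hkn.le).ne'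
  have hCX : (n.choose (y + 2) : ℝ) ≠ 0 := by
    exact_mod_cast (Nat.choose_pos (by omega : y + 2 ≤ n)).ne'
  have hfac : ((y + 2).factorial : ℝ) = (↑y + 2) * (↑y + 1) * (y.factorial : ℝ) := by
    show ((y + 1 + 1).factorial : ℝ) = _
    rw [Nat.factorial_succ, Nat.factorial_succ]
    push_cast; ring
  have hyf : (y.factorial : ℝ) ≠ 0 := by exact_mod_cast Nat.factorial_ne_zero y
  have hn : (n : ℝ) ≠ 0 := by exact_mod_cast (by omega : n ≠ 0)
  have hnx : (((n - k).choose (y + 2) : ℕ) : ℝ) =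
      (n.choose (y + 2) : ℝ) * (((n - (y + 2) - 1).choose k : ℝ) + ((n - (y + 2) - 1).choose (k - 1) : ℝ)) / (n.choose k : ℝ) := by
    rw [eq_div_iff hCK]
    linear_combination hV - (n.choose (y + 2) : ℝ) * hP
  rw [hnx, hfac]
  field_simp
  ring

lemma keyA2 (n k m x : ℕ) (hk : 1 ≤ k) (hkn : k < n) (hx1 : m + 3 ≤ x) (hx2 : x ≤ n - 1) :
    rr n k (((m + 2 : ℕ) : ℤ) - 1) x - ((x : ℝ) - (m + 2)) * rr n k ((m + 2 : ℕ) : ℤ) x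
      = d n k (m + 2) (x - (m + 2)) := by
  obtain ⟨u, rfl⟩ : ∃ u, x = u + m + 3 := ⟨x - (m + 3), by omega⟩
  have e0 : ((m + 2 : ℕ) : ℤ) - 1 = ((m + 1 : ℕ) : ℤ) := by push_cast; ring
  rw [e0, rr_natCast n k (m+1) _ (by omega), rr_natCast n k (m+2) _ (by omega)]
  simp only [d]
  rw [if_neg (by omega : ¬ m + 2 = 0), if_neg (by omega : ¬ m + 2 = 1)]
  have e1 : u + m + 3 - (m + 1) - 1 = u + 1 := by omega
  have e2 : u + m + 3 - (m + 2) - 1 = u := by omega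
  have e3 : u + m + 3 - (m + 2) = u + 1 := by omega
  have e4 : n - (m + 2) - (u + 1) = n - (u + m + 3) := by omega
  have e5 : m + 2 - 1 = m + 1 := by omega
  rw [e1, e2, e3, e4, e5]
  have hCb1 : ∀ j : ℕ, Cb ((k:ℤ) - 1) (j:ℤ) = ((k-1).choose j : ℝ) := by
    intro j
    have h2 : (k:ℤ) - 1 = ((k - 1 : ℕ) : ℤ) := by omega
    rw [h2, Cb_natCast]
  have hCbk : ∀ j : ℕ, Cb (k:ℤ) (j:ℤ) = (k.choose j : ℝ) := fun j => Cb_natCast k j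
  -- peel top of the second (range (m+2+1)) sum
  rw [Finset.sum_range_succ _ (m + 2)]
  -- the peeled term vanishes
  have hpe : ((((m+2:ℕ)):ℝ) - ((m+2:ℕ):ℝ)) * Cb (k:ℤ) ((m+2:ℕ):ℤ)
      * Cb ((n:ℤ) - k) (((u+m+3:ℕ):ℤ) - ((m+2:ℕ):ℤ)) = 0 := by
    rw [sub_self, zero_mul, zero_mul]
  rw [hpe, add_zero]
  -- key recombination
  have h2 : ∑ j ∈ Finset.range (m + 2),
        ((j:ℝ)) * (Cb (k:ℤ) (j:ℤ) * Cb ((n:ℤ) - k) (((u+m+3 : ℕ):ℤ) - j))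
      = (k:ℝ) * ∑ j ∈ Finset.range (m + 1),
          Cb ((k:ℤ) - 1) (j:ℤ) * Cb ((n:ℤ) - k) (((u+m+3 : ℕ):ℤ) - j - 1) := by
    rw [Finset.sum_range_succ' _ (m + 1), Finset.mul_sum]
    simp only [Nat.cast_zero, zero_mul, add_zero]
    apply Finset.sum_congr rfl
    intro j hj
    have ha : ((u+m+3 : ℕ):ℤ) - ((j + 1 : ℕ):ℤ) = ((u+m+3 : ℕ):ℤ) - j - 1 := by
      push_cast; ring
    rw [ha, hCbk (j+1), hCb1 j]
    have hc : ((j:ℝ) + 1) * (k.choose (j+1) : ℝ) = (k:ℝ) * ((k-1).choose j : ℝ) := by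
      have h := Nat.add_one_mul_choose_eq (k - 1) j
      rw [(by omega : k - 1 + 1 = k)] at h
      calc ((j:ℝ) + 1) * (k.choose (j+1) : ℝ) = ((k.choose (j+1) * (j+1) : ℕ) : ℝ) := by
            push_cast; ring
        _ = ((k * (k-1).choose j : ℕ) : ℝ) := by rw [← h]
        _ = (k:ℝ) * ((k-1).choose j : ℝ) := by push_cast; ring
    push_cast
    push_cast at hc
    linear_combination Cb ((n:ℤ) - k) (((u:ℤ) + m + 3) - j - 1) * hc
  -- align d's sum with h2's sum
  have h3 : ∑ j ∈ Finset.range (m + 1),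
        Cb ((k:ℤ) - 1) (j:ℤ) * Cb ((n:ℤ) - k) (((u+1 : ℕ):ℤ) + ((m+2:ℕ):ℤ) - j - 1)
      = ∑ j ∈ Finset.range (m + 1),
        Cb ((k:ℤ) - 1) (j:ℤ) * Cb ((n:ℤ) - k) (((u+m+3 : ℕ):ℤ) - j - 1) := by
    apply Finset.sum_congr rfl
    intro j hj
    congr 1
    congr 1
    push_cast; ring
  rw [h3, (by omega : m + 1 + 1 = m + 2)]
  rw [Cb_natCast n (u+m+3), Nat.cast_choose ℝ (by omega : u + m + 3 ≤ n)]
  generalize hQ : ∑ j ∈ Finset.range (m + 1),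
      Cb ((k:ℤ) - 1) (j:ℤ) * Cb ((n:ℤ) - k) (((u+m+3 : ℕ):ℤ) - j - 1) = Q at h2
  generalize hS2 : ∑ j ∈ Finset.range (m + 2),
      (((m+2:ℕ):ℝ) - j) * Cb (k:ℤ) (j:ℤ) * Cb ((n:ℤ) - k) (((u+m+3 : ℕ):ℤ) - j) = S2
  generalize hS1 : ∑ j ∈ Finset.range (m + 2),
      (((m+1:ℕ):ℝ) - j) * Cb (k:ℤ) (j:ℤ) * Cb ((n:ℤ) - k) (((u+m+3 : ℕ):ℤ) - j) = S1
  -- the recombination identity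
  have hS : ((m:ℝ) + 1) * S2 - ((m:ℝ) + 2) * S1 = (k:ℝ) * Q := by
    rw [← hS2, ← hS1, ← h2, Finset.mul_sum, Finset.mul_sum, ← Finset.sum_sub_distrib]
    apply Finset.sum_congr rfl
    intro j hj
    push_cast
    ring
  have hm2 : ((m:ℝ) + 2) ≠ 0 := by positivity
  have hm1 : ((m:ℝ) + 1) ≠ 0 := by positivity
  have hS1' : S1 = (((m:ℝ) + 1) * S2 - (k:ℝ) * Q) / ((m:ℝ) + 2) := by
    field_simp
    linear_combination -hS
  rw [hS1']
  have hfac1 : ((u+1).factorial : ℝ) = ((u:ℝ) + 1) * (u.factorial : ℝ) := by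
    rw [Nat.factorial_succ]; push_cast; ring
  rw [hfac1]
  have hW : ((u+m+3).factorial : ℝ) ≠ 0 := by exact_mod_cast Nat.factorial_ne_zero _
  have hV : ((n - (u+m+3)).factorial : ℝ) ≠ 0 := by exact_mod_cast Nat.factorial_ne_zero _
  have hN : ((n).factorial : ℝ) ≠ 0 := by exact_mod_cast Nat.factorial_ne_zero _
  have hFu : ((u).factorial : ℝ) ≠ 0 := by exact_mod_cast Nat.factorial_ne_zero _
  push_cast
  rw [show ((m:ℝ) + 2) - 1 = (m:ℝ) + 1 from by ring]
  field_simp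
  ring

lemma keyB (n k : ℕ) (hk : 1 ≤ k) (hkn : k < n) :
    rr n k ((k : ℤ) - 1) (n - 1) - xi n k = delta n k := by
  rcases eq_or_lt_of_le hk with h1 | h2
  · -- k = 1
    subst h1
    have e0 : ((1:ℕ):ℤ) - 1 = 0 := by norm_num
    rw [e0]
    obtain ⟨p, rfl⟩ : ∃ p, n = p + 2 := ⟨n - 2, by omega⟩
    unfold rr xi delta
    norm_num
    have eC : Cb (0:ℤ) 1 = 0 := Cb_eq_zero _ _ (by norm_num)
    have eCn : Cb ((p:ℤ)+2) 1 = ((p:ℝ)+2) := by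
      have h := Cb_natCast (p+2) 1
      rw [Nat.choose_one_right] at h
      push_cast at h
      exact h
    have eS : ∑ j ∈ Finset.Icc 1 (p+1), Cb ((p:ℤ) + 2 - (j:ℤ) - 1) (0:ℤ) / (j:ℝ)
        = ∑ j ∈ Finset.Icc 1 (p+1), ((j:ℝ))⁻¹ := by
      apply Finset.sum_congr rfl
      intro j hj
      simp only [Finset.mem_Icc] at hj
      rw [Cb_of_nonneg_zero _ (by omega), one_div]
    rw [eC, eCn, eS]
    generalize ∑ j ∈ Finset.Icc 1 (p+1), ((j:ℝ))⁻¹ = S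
    have hfac : ((p+2).factorial : ℝ) = ((p:ℝ)+2) * ((p:ℝ)+1) * (p.factorial : ℝ) := by
      show (((p+1)+1).factorial : ℝ) = _
      rw [Nat.factorial_succ, Nat.factorial_succ]
      push_cast; ring
    rw [hfac]
    have h1 : ((p:ℝ)+1) ≠ 0 := by positivity
    have h2 : ((p:ℝ)+2) ≠ 0 := by positivity
    have h3 : ((p).factorial : ℝ) ≠ 0 := by exact_mod_cast Nat.factorial_ne_zero _
    field_simp
    ring
  · -- k ≥ 2
    obtain ⟨q, rfl⟩ : ∃ q, k = q + 2 := ⟨k - 2, by omega⟩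
    have e0 : ((q + 2 : ℕ) : ℤ) - 1 = ((q + 1 : ℕ) : ℤ) := by push_cast; ring
    rw [e0, rr_natCast n (q+2) (q+1) (n-1) (by omega)]
    have hzero : ∑ j ∈ Finset.range (q+1+1),
        (((q+1:ℕ):ℝ) - j) * Cb ((q+2:ℕ):ℤ) (j:ℤ) * Cb ((n:ℤ) - ((q+2:ℕ):ℤ)) (((n-1:ℕ):ℤ) - j)
        = 0 := by
      apply Finset.sum_eq_zero
      intro j hj
      simp only [Finset.mem_range] at hj
      rcases eq_or_lt_of_le (Nat.lt_succ_iff.mp hj) with rfl | hlt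
      · rw [sub_self, zero_mul, zero_mul]
      · rw [Cb_eq_zero ((n:ℤ) - ((q+2:ℕ):ℤ)) (((n-1:ℕ):ℤ) - j) (by omega)]
        ring
    rw [hzero]
    unfold xi delta
    rw [if_neg (by omega : ¬ q + 2 = 1)]
    have e1 : n - 1 - (q+1) - 1 = n - (q+2) - 1 := by omega
    rw [e1]
    have hnf : (n.factorial : ℝ) = (n:ℝ) * ((n-1).factorial : ℝ) := by
      rw [← Nat.mul_factorial_pred (by omega : n ≠ 0)]
      push_cast; ring
    have hkf : ((n - (q+2)).factorial : ℝ) = ((n:ℝ) - ((q:ℝ)+2)) * ((n - (q+2) - 1).factorial : ℝ) := by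
      rw [← Nat.mul_factorial_pred (by omega : n - (q+2) ≠ 0)]
      push_cast [Nat.cast_sub hkn.le]
      ring
    rw [hnf, hkf]
    have h3 : ((n-1).factorial : ℝ) ≠ 0 := by exact_mod_cast Nat.factorial_ne_zero _
    have h4 : ((n - (q+2) - 1).factorial : ℝ) ≠ 0 := by exact_mod_cast Nat.factorial_ne_zero _
    have h5 : (n:ℝ) ≠ 0 := by exact_mod_cast (by omega : n ≠ 0)
    push_cast
    field_simp
    ring

-- unified pointwise identity
lemma keyA (n k i x : ℕ) (hk : 1 ≤ k) (hkn : k < n) (hx1 : i + 1 ≤ x) (hx2 : x ≤ n - 1) :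
    rr n k ((i : ℤ) - 1) x - ((x : ℝ) - i) * rr n k (i : ℤ) x = d n k i (x - i) := by
  match i with
  | 0 =>
    have h := keyA0 n k x hk hkn (by omega)
    simpa using h
  | 1 =>
    have h := keyA1 n k x hk hkn (by omega) hx2
    simpa using h
  | (m+2) =>
    have h := keyA2 n k m x hk hkn (by omega) hx2
    push_cast at h ⊢
    convert h using 2

lemma Gam_zero (n k l : ℕ) (w : ℕ → ℕ) : Gam n k l 1 0 w = 1 := by
  unfold Gam
  rw [if_neg]
  rintro ⟨-, h, -⟩
  omega

lemma prod_Icc_bot (a b : ℕ) (h : a ≤ b) (f : ℕ → ℝ) :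
    ∏ j ∈ Finset.Icc a b, f j = f a * ∏ j ∈ Finset.Icc (a+1) b, f j := by
  rw [Finset.Icc_eq_cons_Ioc h, Finset.prod_cons, ← Finset.Icc_add_one_left_eq_Ioc]

lemma sum_Icc_bot (a b : ℕ) (h : a ≤ b) (f : ℕ → ℝ) :
    ∑ j ∈ Finset.Icc a b, f j = f a + ∑ j ∈ Finset.Icc (a+1) b, f j := by
  rw [Finset.Icc_eq_cons_Ioc h, Finset.sum_cons, ← Finset.Icc_add_one_left_eq_Ioc]

lemma sum_Icc_shift (b : ℕ) (f : ℕ → ℝ) :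
    ∑ j ∈ Finset.Icc 2 (b+1), f j = ∑ j ∈ Finset.Icc 1 b, f (j+1) := by
  rw [← Finset.map_add_right_Icc 1 b 1, Finset.sum_map]
  simp [addRightEmbedding]

lemma prod_Icc_shift (a b : ℕ) (f : ℕ → ℝ) :
    ∏ j ∈ Finset.Icc (a+1) (b+1), f j = ∏ j ∈ Finset.Icc a b, f (j+1) := by
  rw [← Finset.map_add_right_Icc a b 1, Finset.prod_map]
  simp [addRightEmbedding]

lemma Gam_succ (n k l j : ℕ) (hj : j + 1 ≤ k - l) (w : ℕ → ℕ) :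
    Gam n k l 1 (j+1) (shift l w)
      = ((w (l+1) : ℝ) - l) * Gam n k (l+1) 1 j (shift (l+1) w) := by
  rcases Nat.eq_zero_or_pos j with rfl | hj0
  · rw [Gam_zero]
    unfold Gam
    rw [if_pos ⟨le_rfl, le_rfl, hj⟩]
    rw [Finset.Icc_self, Finset.prod_singleton]
    simp only [shift]
    push_cast
    ring
  · unfold Gam
    rw [if_pos ⟨le_rfl, by omega, hj⟩, if_pos ⟨le_rfl, hj0, by omega⟩]
    rw [prod_Icc_bot 1 (j+1) (by omega), prod_Icc_shift 1 j]
    have hhead : ((shift l w 1 : ℕ) : ℝ) - l - ((1:ℕ):ℝ) + 1 = ((w (l+1) : ℝ) - l) := by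
      simp only [shift]
      push_cast
      ring
    rw [hhead]
    congr 1
    apply Finset.prod_congr rfl
    intro t ht
    simp only [shift]
    rw [show l + (t+1) = l+1+t from by omega]
    push_cast
    ring

lemma Rmap_succ (n k l j : ℕ) (hj1 : 1 ≤ j) (hj : j + 1 ≤ k - l) (w : ℕ → ℕ) :
    Rmap n k l (shift l w) (j+1) = Rmap n k (l+1) (shift (l+1) w) j := by
  unfold Rmap
  rw [if_pos (show 1 ≤ j + 1 ∧ j + 1 ≤ k - l from ⟨by omega, by omega⟩),
      if_pos (show 1 ≤ j ∧ j ≤ k - (l+1) from ⟨hj1, by omega⟩)]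
  simp only [shift]
  have e1 : (l:ℤ) + ((j:ℤ) + 1) - 1 = ((l+1:ℕ):ℤ) + j - 1 := by push_cast; ring
  have e2 : l + (j+1) = l + 1 + j := by omega
  push_cast at e1
  push_cast
  rw [e1, e2]
  congr 2
  by_cases h : j = k - (l+1)
  · rw [if_pos (by omega : j + 1 = k - l), if_pos h]
  · rw [if_neg (by omega : ¬ j + 1 = k - l), if_neg h]
    rw [show l + (j+1+1) = l+1+(j+1) from by omega]

lemma Tmap_succ (n k l : ℕ) (hl : l < k) (w : ℕ → ℕ) :
    Tmap n k l (shift l w) = ((w (l+1) : ℝ) - l) *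
      ((rr n k (l:ℤ) (w (l+1)) - rr n k (l:ℤ) (if 1 = k - l then n - 1 else w (l+2)))
        + Tmap n k (l+1) (shift (l+1) w)) := by
  obtain ⟨b, hb⟩ : ∃ b, k - l = b + 1 := ⟨k - l - 1, by omega⟩
  have hb2 : k - (l+1) = b := by omega
  have hR1 : Rmap n k l (shift l w) 1 * Gam n k l 1 1 (shift l w)
      = ((w (l+1) : ℝ) - l) * (rr n k (l:ℤ) (w (l+1))
          - rr n k (l:ℤ) (if 1 = k - l then n - 1 else w (l+2))) := by
    have hG : Gam n k l 1 1 (shift l w) = ((w (l+1) : ℝ) - l) * Gam n k (l+1) 1 0 (shift (l+1) w) :=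
      Gam_succ n k l 0 (by omega) w
    rw [hG, Gam_zero]
    unfold Rmap
    rw [if_pos (show 1 ≤ 1 ∧ 1 ≤ k - l from ⟨le_rfl, by omega⟩)]
    have e1 : (l:ℤ) + ((1:ℕ):ℤ) - 1 = (l:ℤ) := by push_cast; ring
    push_cast at e1
    push_cast
    rw [e1]
    have e2 : shift l w (1+1) = w (l+2) := rfl
    have e3 : shift l w 1 = w (l+1) := rfl
    rw [e2, e3]
    ring
  unfold Tmap
  rw [show Finset.Icc 1 (k-l) = Finset.Icc 1 (b+1) from by rw [hb],
      show Finset.Icc 1 (k-(l+1)) = Finset.Icc 1 b from by rw [hb2],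
      show Gam n k l 1 (k-l) (shift l w) = Gam n k l 1 (b+1) (shift l w) from by rw [hb],
      show Gam n k (l+1) 1 (k-(l+1)) (shift (l+1) w) = Gam n k (l+1) 1 b (shift (l+1) w) from by
        rw [hb2]]
  rw [sum_Icc_bot 1 (b+1) (by omega), sum_Icc_shift b, hR1]
  have hsum : ∑ j ∈ Finset.Icc 1 b, Rmap n k l (shift l w) (j+1) * Gam n k l 1 (j+1) (shift l w)
      = ((w (l+1) : ℝ) - l) * ∑ j ∈ Finset.Icc 1 b,
          Rmap n k (l+1) (shift (l+1) w) j * Gam n k (l+1) 1 j (shift (l+1) w) := by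
    rw [Finset.mul_sum]
    apply Finset.sum_congr rfl
    intro j hj
    simp only [Finset.mem_Icc] at hj
    rw [Rmap_succ n k l j hj.1 (by omega), Gam_succ n k l j (by omega)]
    ring
  rw [hsum]
  have hG : Gam n k l 1 (b+1) (shift l w)
      = ((w (l+1) : ℝ) - l) * Gam n k (l+1) 1 b (shift (l+1) w) :=
    Gam_succ n k l b (by omega) w
  rw [hG]
  ring

lemma Dmap_succ (n k l : ℕ) (hk : 1 ≤ k) (hkn : k < n) (w : ℕ → ℕ)
    (hw : memX n k 0 w) (hl : l < k) :
    Dmap n k l (shift l w) = d n k l (w (l+1) - l)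
      + ((w (l+1) : ℝ) - l) * Dmap n k (l+1) (shift (l+1) w) := by
  have hwb : l + 1 ≤ w (l+1) ∧ w (l+1) ≤ n - 1 := by
    have := hw (l+1) (by simp only [Finset.mem_Icc]; omega)
    omega
  unfold Dmap
  rw [if_neg (by omega : ¬ l = k), Tmap_succ n k l hl w]
  have e1 : ((l+1 : ℕ):ℤ) - 1 = (l:ℤ) := by push_cast; ring
  rw [e1]
  have e2 : (if l + 1 = k then n - 1 else shift (l+1) w 1) = (if 1 = k - l then n - 1 else w (l+2)) := by
    by_cases h : l + 1 = k
    · rw [if_pos h, if_pos (by omega)]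
    · rw [if_neg h, if_neg (by omega)]
      rfl
  rw [e2]
  have hA := keyA n k l (w (l+1)) hk hkn (by omega) hwb.2
  have e3 : shift l w 1 = w (l+1) := rfl
  rw [e3]
  have e4 : ((w (l+1) - l : ℕ) : ℝ) = (w (l+1) : ℝ) - l := by
    push_cast [Nat.cast_sub (by omega : l ≤ w (l+1))]
    ring
  linear_combination hA

lemma Dmap_base (n k : ℕ) (hk : 1 ≤ k) (hkn : k < n) (w : ℕ → ℕ) :
    Dmap n k k w = delta n k := by
  unfold Dmap Tmap
  rw [if_pos rfl, show k - k = 0 from by omega]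
  rw [Finset.Icc_eq_empty (by omega : ¬ (1:ℕ) ≤ 0), Finset.sum_empty, Gam_zero]
  rw [mul_one, zero_add]
  have := keyB n k hk hkn
  linear_combination this

theorem Dmap_shift_eq (n k : ℕ) (hk : 1 ≤ k) (hkn : k < n) (w : ℕ → ℕ)
    (hw : memX n k 0 w) (l : ℕ) (hl : l ≤ k) :
    Dmap n k l (shift l w) =
      (∑ i ∈ Finset.Icc l (k - 1),
          (∏ j ∈ Finset.Icc (l + 1) i, ((w j : ℝ) - j + 1)) * d n k i (w (i + 1) - i))
        + (∏ j ∈ Finset.Icc (l + 1) k, ((w j : ℝ) - j + 1)) * delta n k := by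
  have main : ∀ m l, l ≤ k → k - l = m →
      Dmap n k l (shift l w) =
        (∑ i ∈ Finset.Icc l (k - 1),
            (∏ j ∈ Finset.Icc (l + 1) i, ((w j : ℝ) - j + 1)) * d n k i (w (i + 1) - i))
          + (∏ j ∈ Finset.Icc (l + 1) k, ((w j : ℝ) - j + 1)) * delta n k := by
    intro m
    induction m with
    | zero =>
      intro l hl h0
      have : l = k := by omega
      subst this
      rw [Finset.Icc_eq_empty (by omega : ¬ l ≤ l - 1), Finset.sum_empty,
        Finset.Icc_eq_empty (by omega : ¬ l + 1 ≤ l), Finset.prod_empty]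
      rw [Dmap_base n l hk hkn (shift l w)]
      ring
    | succ m ih =>
      intro l hl h0
      have hlk : l < k := by omega
      rw [Dmap_succ n k l hk hkn w hw hlk, ih (l+1) (by omega) (by omega)]
      have hwb : l + 1 ≤ w (l+1) := by
        have := hw (l+1) (by simp only [Finset.mem_Icc]; omega)
        omega
      have hc : ((w (l+1) : ℝ) - ((l+1 : ℕ) : ℝ) + 1) = ((w (l+1) : ℝ) - l) := by push_cast; ring
      have hidx : l + 1 + 1 = l + 2 := rfl
      rw [sum_Icc_bot l (k-1) (by omega),
        Finset.Icc_eq_empty (by omega : ¬ l + 1 ≤ l), Finset.prod_empty]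
      have hs : ∑ i ∈ Finset.Icc (l+1) (k-1),
            (∏ j ∈ Finset.Icc (l + 1) i, ((w j : ℝ) - j + 1)) * d n k i (w (i + 1) - i)
          = ((w (l+1) : ℝ) - l) * ∑ i ∈ Finset.Icc (l+1) (k-1),
            (∏ j ∈ Finset.Icc (l + 2) i, ((w j : ℝ) - j + 1)) * d n k i (w (i + 1) - i) := by
        rw [Finset.mul_sum]
        apply Finset.sum_congr rfl
        intro i hi
        simp only [Finset.mem_Icc] at hi
        rw [prod_Icc_bot (l+1) i hi.1, hc, hidx]
        ring
      have hp : ∏ j ∈ Finset.Icc (l + 1) k, ((w j : ℝ) - j + 1)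
          = ((w (l+1) : ℝ) - l) * ∏ j ∈ Finset.Icc (l + 2) k, ((w j : ℝ) - j + 1) := by
        rw [prod_Icc_bot (l+1) k (by omega), hc, hidx]
      rw [hs, hp]
      ring
  exact main (k - l) l hl rfl
end Secretary
end
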